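/- The clobber position ooxoxx is equivalent to the sum of the clobber positions oxox and ox. -/

import Mathlib

namespace SetTheory

universe u

/-- Conway's pre-games, as in Mathlib (Dec 2024), which no longer provides them. -/
inductive PGame : Type (u + 1)
  | mk : ∀ α β : Type u, (α → PGame) → (β → PGame) → PGame

namespace PGame

def ofLists (L R : List PGame.{u}) : PGame.{u} :=
  mk (ULift (Fin L.length)) (ULift (Fin R.length)) (fun i => L.get i.down) fun j => R.get j.down

instance : Zero PGame := ⟨⟨PEmpty, PEmpty, PEmpty.elim, PEmpty.elim⟩⟩

/-- The pair `(x ≤ y, x ⧏ y)`, by recursion on `x`, then on `y`. -/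
noncomputable def leLf : PGame.{u} → PGame.{u} → Prop × Prop :=
  fun x => PGame.rec (motive := fun _ => PGame.{u} → Prop × Prop)
    (fun xl xr xL xR IHxL IHxR y => PGame.rec (motive := fun _ => Prop × Prop)
      (fun yl yr yL yR IHyL IHyR =>
        ((∀ i, (IHxL i (mk yl yr yL yR)).2) ∧ (∀ j, (IHyR j).2),
         (∃ i, (IHyL i).1) ∨ (∃ j, (IHxR j (mk yl yr yL yR)).1))) y) x

noncomputable instance : LE PGame.{u} := ⟨fun x y => (leLf x y).1⟩

def Equiv (x y : PGame.{u}) : Prop := x ≤ y ∧ y ≤ x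

instance : HasEquiv PGame.{u} := ⟨Equiv⟩

noncomputable def add (x : PGame.{u}) : PGame.{u} → PGame.{u} :=
  PGame.rec (motive := fun _ => PGame.{u} → PGame.{u})
    (fun xl xr _ _ IHxL IHxR y => PGame.rec (motive := fun _ => PGame.{u})
      (fun yl yr yL yR IHyL IHyR =>
        mk (xl ⊕ yl) (xr ⊕ yr) (Sum.elim (fun i => IHxL i (mk yl yr yL yR)) IHyL)
          (Sum.elim (fun j => IHxR j (mk yl yr yL yR)) IHyR)) y) x

noncomputable instance : Add PGame.{u} := ⟨add⟩

end PGame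

end SetTheory

open SetTheory PGame

inductive Cell | x | o | e
deriving DecidableEq

abbrev Pos := List Cell

/-- All positions reachable by one move of the player with stones `me`
clobbering an adjacent stone of the opponent `opp`. -/
def movesAux (me opp : Cell) : Pos → List Pos
  | a :: b :: rest =>
      (if a = me ∧ b = opp then [Cell.e :: me :: rest] else []) ++
      (if a = opp ∧ b = me then [me :: Cell.e :: rest] else []) ++
      (movesAux me opp (b :: rest)).map (a :: ·)
  | _ => []

def leftMoves (p : Pos) : List Pos := movesAux Cell.x Cell.o p
def rightMoves (p : Pos) : List Pos := movesAux Cell.o Cell.x p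

def stones (p : Pos) : Nat := p.countP (· != Cell.e)

/-- Game value of a clobber position, via fuel recursion (each move removes one stone). -/
def valueFuel : Nat → Pos → PGame
  | 0, _ => 0
  | n+1, p => PGame.ofLists ((leftMoves p).map (valueFuel n)) ((rightMoves p).map (valueFuel n))

def value (p : Pos) : PGame := valueFuel (stones p) p

namespace SetTheory
namespace PGame

universe u

def LeftMoves : PGame.{u} → Type u
  | mk l _ _ _ => l

def RightMoves : PGame.{u} → Type u
  | mk _ r _ _ => r

def moveLeft : (g : PGame.{u}) → LeftMoves g → PGame.{u}
  | mk _ _ L _ => L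

def moveRight : (g : PGame.{u}) → RightMoves g → PGame.{u}
  | mk _ _ _ R => R

theorem leLf_fst {xl xr : Type u} (xL : xl → PGame.{u}) (xR : xr → PGame.{u})
    {yl yr : Type u} (yL : yl → PGame.{u}) (yR : yr → PGame.{u}) :
    (leLf (mk xl xr xL xR) (mk yl yr yL yR)).1 =
      ((∀ i, (leLf (xL i) (mk yl yr yL yR)).2) ∧ (∀ j, (leLf (mk xl xr xL xR) (yR j)).2)) := rfl

theorem leLf_snd {xl xr : Type u} (xL : xl → PGame.{u}) (xR : xr → PGame.{u})
    {yl yr : Type u} (yL : yl → PGame.{u}) (yR : yr → PGame.{u}) :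
    (leLf (mk xl xr xL xR) (mk yl yr yL yR)).2 =
      ((∃ i, (leLf (mk xl xr xL xR) (yL i)).1) ∨ (∃ j, (leLf (xR j) (mk yl yr yL yR)).1)) := rfl

theorem lf_iff_not_le (x : PGame.{u}) : ∀ y : PGame.{u},
    ((leLf x y).2 ↔ ¬ (leLf y x).1) ∧ ((leLf y x).2 ↔ ¬ (leLf x y).1) := by
  induction x with
  | mk xl xr xL xR ihxL ihxR =>
  intro y
  induction y with
  | mk yl yr yL yR ihyL ihyR =>
  simp only [leLf_fst, leLf_snd]
  refine ⟨?_, ?_⟩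
  · rw [not_and_or, not_forall, not_forall]
    refine or_congr (exists_congr fun i => ?_) (exists_congr fun j => ?_)
    · rw [(ihyL i).2, not_not]
    · rw [(ihxR j _).2, not_not]
  · rw [not_and_or, not_forall, not_forall]
    refine or_congr (exists_congr fun i => ?_) (exists_congr fun j => ?_)
    · rw [(ihxL i _).1, not_not]
    · rw [(ihyR j).1, not_not]

theorem le_iff_forall_lf {x y : PGame.{u}} :
    x ≤ y ↔ (∀ i, ¬ y ≤ x.moveLeft i) ∧ ∀ j, ¬ y.moveRight j ≤ x := by
  cases x with
  | mk xl xr xL xR =>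
  cases y with
  | mk yl yr yL yR =>
  show (leLf _ _).1 ↔ (∀ i, ¬ (leLf _ (xL i)).1) ∧ ∀ j, ¬ (leLf (yR j) _).1
  rw [leLf_fst]
  exact and_congr (forall_congr' fun i => (lf_iff_not_le _ _).1)
    (forall_congr' fun j => (lf_iff_not_le _ _).2)

theorem ofLists_moveLeft {L R : List PGame.{u}} (i : ULift (Fin L.length)) :
    (ofLists L R).moveLeft i = L[i.down.val] := by
  show L.get i.down = _
  simp

theorem ofLists_moveLeft' {L R : List PGame.{u}} (i : (ofLists L R).LeftMoves) :
    (ofLists L R).moveLeft i =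
      L[(ULift.down (α := Fin L.length) i).val]'(ULift.down (α := Fin L.length) i).isLt :=
  ofLists_moveLeft (R := R) (ULift.up (ULift.down (α := Fin L.length) i))

theorem ofLists_moveRight {L R : List PGame.{u}} (i : ULift (Fin R.length)) :
    (ofLists L R).moveRight i = R[i.down.val] := by
  show R.get i.down = _
  simp

theorem ofLists_moveRight' {L R : List PGame.{u}} (i : (ofLists L R).RightMoves) :
    (ofLists L R).moveRight i =
      R[(ULift.down (α := Fin R.length) i).val]'(ULift.down (α := Fin R.length) i).isLt :=
  ofLists_moveRight (L := L) (ULift.up (ULift.down (α := Fin R.length) i))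

noncomputable def toLeftMovesAdd {x y : PGame.{u}} (i : LeftMoves x ⊕ LeftMoves y) :
    LeftMoves (x + y) := by
  cases x; cases y; exact i

noncomputable def toRightMovesAdd {x y : PGame.{u}} (i : RightMoves x ⊕ RightMoves y) :
    RightMoves (x + y) := by
  cases x; cases y; exact i

theorem add_moveLeft_inl {x y : PGame.{u}} (i : LeftMoves x) :
    (x + y).moveLeft (toLeftMovesAdd (Sum.inl i)) = x.moveLeft i + y := by
  cases x; cases y; rfl

theorem add_moveLeft_inr {x y : PGame.{u}} (i : LeftMoves y) :
    (x + y).moveLeft (toLeftMovesAdd (Sum.inr i)) = x + y.moveLeft i := by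
  cases x; cases y; rfl

theorem add_moveRight_inl {x y : PGame.{u}} (i : RightMoves x) :
    (x + y).moveRight (toRightMovesAdd (Sum.inl i)) = x.moveRight i + y := by
  cases x; cases y; rfl

theorem add_moveRight_inr {x y : PGame.{u}} (i : RightMoves y) :
    (x + y).moveRight (toRightMovesAdd (Sum.inr i)) = x + y.moveRight i := by
  cases x; cases y; rfl

@[elab_as_elim]
theorem leftMoves_add_cases {x y : PGame.{u}} (k : LeftMoves (x + y)) {P : LeftMoves (x + y) → Prop}
    (hl : ∀ i, P (toLeftMovesAdd (Sum.inl i))) (hr : ∀ i, P (toLeftMovesAdd (Sum.inr i))) : P k := by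
  cases x; cases y
  cases k with
  | inl i => exact hl i
  | inr i => exact hr i

@[elab_as_elim]
theorem rightMoves_add_cases {x y : PGame.{u}} (k : RightMoves (x + y)) {P : RightMoves (x + y) → Prop}
    (hl : ∀ i, P (toRightMovesAdd (Sum.inl i))) (hr : ∀ i, P (toRightMovesAdd (Sum.inr i))) : P k := by
  cases x; cases y
  cases k with
  | inl i => exact hl i
  | inr i => exact hr i

end PGame
end SetTheory

/-! ### A reflection framework for finite games -/

/-- Concrete finite games. -/
inductive FG : Type where
  | node : List FG → List FG → FG

namespace FG

def L : FG → List FG | node l _ => l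
def R : FG → List FG | node _ r => r

end FG

/-- Fuel-based boolean test for `≤` between finite games. -/
def leB : Nat → FG → FG → Bool
  | 0, _, _ => true
  | n+1, x, y =>
      (x.L.all fun xl => !(leB n y xl)) && (y.R.all fun yr => !(leB n yr x))

/-- Finite-game analogue of `valueFuel`. -/
def fgValueFuel : Nat → Pos → FG
  | 0, _ => .node [] []
  | n+1, p => .node ((leftMoves p).map (fgValueFuel n)) ((rightMoves p).map (fgValueFuel n))

/-- Fuel-based sum of finite games. -/
def addF : Nat → FG → FG → FG
  | 0, _, _ => .node [] []
  | n+1, x, y =>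
      .node ((x.L.map fun a => addF n a y) ++ (y.L.map fun b => addF n x b))
            ((x.R.map fun a => addF n a y) ++ (y.R.map fun b => addF n x b))

/-- A finite game `Agrees` with a pgame if their move trees match up. -/
def Agrees : FG → PGame → Prop
  | .node l r, g =>
      (∀ f ∈ l, ∃ i, Agrees f (g.moveLeft i)) ∧
      (∀ i, ∃ k : Fin l.length, Agrees l[k.val] (g.moveLeft i)) ∧
      (∀ f ∈ r, ∃ j, Agrees f (g.moveRight j)) ∧
      (∀ j, ∃ k : Fin r.length, Agrees r[k.val] (g.moveRight j))
termination_by x _ => sizeOf x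
decreasing_by
  · have := List.sizeOf_lt_of_mem ‹_ ∈ l›; simp; omega
  · have := List.sizeOf_lt_of_mem (l.getElem_mem ‹Fin l.length›.isLt); simp; omega
  · have := List.sizeOf_lt_of_mem ‹_ ∈ r›; simp; omega
  · have := List.sizeOf_lt_of_mem (r.getElem_mem ‹Fin r.length›.isLt); simp; omega

/-- Turn a membership witness into an index witness. -/
theorem toIdx {l : List FG} {P : FG → Prop} {f} (hf : f ∈ l) (h : P f) :
    ∃ k : Fin l.length, P l[k.val] := by
  obtain ⟨k, hk, rfl⟩ := List.mem_iff_getElem.mp hf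
  exact ⟨⟨k, hk⟩, h⟩

theorem one_le_sizeOf (x : FG) : 1 ≤ sizeOf x := by
  cases x with | node l r => simp; omega

theorem leB_correct : ∀ n : Nat, ∀ x y : FG, ∀ gx gy : PGame,
    sizeOf x + sizeOf y ≤ n → Agrees x gx → Agrees y gy →
    (leB n x y = true ↔ gx ≤ gy) := by
  intro n
  induction n using Nat.strong_induction_on with
  | _ n ih =>
    intro x y gx gy hn hax hay
    match n with
    | 0 =>
      exfalso
      have := one_le_sizeOf x; have := one_le_sizeOf y; omega
    | m+1 =>
      have hIH : ∀ (a b : FG) (ga gb : PGame), sizeOf a + sizeOf b ≤ m →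
          Agrees a ga → Agrees b gb → (leB m a b = true ↔ ga ≤ gb) :=
        fun a b ga gb h => ih m (Nat.lt_succ_self m) a b ga gb h
      obtain ⟨xl, xr⟩ := x
      obtain ⟨yl, yr⟩ := y
      have hax' := hax
      have hay' := hay
      rw [Agrees] at hax hay
      obtain ⟨hx1, hx2, hx3, hx4⟩ := hax
      obtain ⟨hy1, hy2, hy3, hy4⟩ := hay
      have hxl : ∀ f ∈ xl, sizeOf f + sizeOf (FG.node yl yr) ≤ m := by
        intro f hf
        have h1 := List.sizeOf_lt_of_mem hf
        simp only [FG.node.sizeOf_spec] at hn ⊢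
        omega
      have hyr : ∀ f ∈ yr, sizeOf (FG.node xl xr) + sizeOf f ≤ m := by
        intro f hf
        have h1 := List.sizeOf_lt_of_mem hf
        simp only [FG.node.sizeOf_spec] at hn ⊢
        omega
      rw [PGame.le_iff_forall_lf]
      simp only [leB, FG.L, FG.R, Bool.and_eq_true, List.all_eq_true, Bool.not_eq_true']
      constructor
      · rintro ⟨hA, hB⟩
        constructor
        · intro i
          obtain ⟨k, haf⟩ := hx2 i
          have hf : xl[k.val] ∈ xl := xl.getElem_mem k.isLt
          set f := xl[k.val] with hfdef
          have := hIH (FG.node yl yr) f gy _ (by have := hxl f hf; omega) hay' haf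
          rw [hA f hf] at this
          simpa using this.symm.not
        · intro j
          obtain ⟨k, haf⟩ := hy4 j
          have hf : yr[k.val] ∈ yr := yr.getElem_mem k.isLt
          set f := yr[k.val] with hfdef
          have := hIH f (FG.node xl xr) _ gx (by have := hyr f hf; omega) haf hax'
          rw [hB f hf] at this
          simpa using this.symm.not
      · rintro ⟨hA, hB⟩
        constructor
        · intro f hf
          obtain ⟨i, haf⟩ := hx1 f hf
          have := hIH (FG.node yl yr) f gy _ (by have := hxl f hf; omega) hay' haf
          rw [← Bool.not_eq_true]
          exact fun h => hA i (this.mp h)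
        · intro f hf
          obtain ⟨j, haf⟩ := hy3 f hf
          have := hIH f (FG.node xl xr) _ gx (by have := hyr f hf; omega) haf hax'
          rw [← Bool.not_eq_true]
          exact fun h => hB j (this.mp h)

theorem agrees_valueFuel : ∀ (n : Nat) (p : Pos), Agrees (fgValueFuel n p) (valueFuel n p) := by
  intro n
  induction n with
  | zero =>
    intro p
    rw [fgValueFuel, valueFuel, Agrees]
    refine ⟨?_, ?_, ?_, ?_⟩ <;>
      first
      | (intro f hf; simp at hf)
      | (intro i; exact PEmpty.elim i)
  | succ n ihn =>
    intro p
    rw [fgValueFuel, valueFuel, Agrees]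
    refine ⟨?_, ?_, ?_, ?_⟩
    · intro f hf
      obtain ⟨q, hq, rfl⟩ := List.mem_map.mp hf
      obtain ⟨k, hk, rfl⟩ := List.mem_iff_getElem.mp hq
      refine ⟨ULift.up (⟨k, by simpa using hk⟩ : Fin _), ?_⟩
      rw [PGame.ofLists_moveLeft]
      simpa using ihn _
    · intro i
      have hk : i.down.val < (leftMoves p).length := by simpa using i.down.isLt
      refine toIdx (P := fun f => Agrees f _) (List.mem_map_of_mem ((leftMoves p).getElem_mem hk)) ?_
      rw [PGame.ofLists_moveLeft']
      simpa using ihn _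
    · intro f hf
      obtain ⟨q, hq, rfl⟩ := List.mem_map.mp hf
      obtain ⟨k, hk, rfl⟩ := List.mem_iff_getElem.mp hq
      refine ⟨ULift.up (⟨k, by simpa using hk⟩ : Fin _), ?_⟩
      rw [PGame.ofLists_moveRight]
      simpa using ihn _
    · intro j
      have hk : j.down.val < (rightMoves p).length := by simpa using j.down.isLt
      refine toIdx (P := fun f => Agrees f _) (List.mem_map_of_mem ((rightMoves p).getElem_mem hk)) ?_
      rw [PGame.ofLists_moveRight']
      simpa using ihn _

theorem agrees_addF : ∀ (n : Nat) (x y : FG) (gx gy : PGame),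
    sizeOf x + sizeOf y ≤ n → Agrees x gx → Agrees y gy →
    Agrees (addF n x y) (gx + gy) := by
  intro n
  induction n using Nat.strong_induction_on with
  | _ n ih =>
    intro x y gx gy hn hax hay
    match n with
    | 0 =>
      exfalso
      have := one_le_sizeOf x; have := one_le_sizeOf y; omega
    | m+1 =>
      have hIH : ∀ (a b : FG) (ga gb : PGame), sizeOf a + sizeOf b ≤ m →
          Agrees a ga → Agrees b gb → Agrees (addF m a b) (ga + gb) :=
        fun a b ga gb h => ih m (Nat.lt_succ_self m) a b ga gb h
      obtain ⟨xl, xr⟩ := x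
      obtain ⟨yl, yr⟩ := y
      have hax' := hax
      have hay' := hay
      rw [Agrees] at hax hay
      obtain ⟨hx1, hx2, hx3, hx4⟩ := hax
      obtain ⟨hy1, hy2, hy3, hy4⟩ := hay
      have hsz : ∀ f, (f ∈ xl ∨ f ∈ xr) → sizeOf f + sizeOf (FG.node yl yr) ≤ m := by
        rintro f (hf | hf) <;>
        · have h1 := List.sizeOf_lt_of_mem hf
          simp only [FG.node.sizeOf_spec] at hn ⊢
          omega
      have hsz' : ∀ f, (f ∈ yl ∨ f ∈ yr) → sizeOf (FG.node xl xr) + sizeOf f ≤ m := by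
        rintro f (hf | hf) <;>
        · have h1 := List.sizeOf_lt_of_mem hf
          simp only [FG.node.sizeOf_spec] at hn ⊢
          omega
      rw [addF, Agrees]
      simp only [FG.L, FG.R]
      refine ⟨?_, ?_, ?_, ?_⟩
      · intro f hf
        rcases List.mem_append.mp hf with hf | hf
        · obtain ⟨a, ha, rfl⟩ := List.mem_map.mp hf
          obtain ⟨i, hai⟩ := hx1 a ha
          refine ⟨toLeftMovesAdd (Sum.inl i), ?_⟩
          rw [PGame.add_moveLeft_inl]
          exact hIH _ _ _ _ (hsz a (Or.inl ha)) hai hay'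
        · obtain ⟨b, hb, rfl⟩ := List.mem_map.mp hf
          obtain ⟨i, hbi⟩ := hy1 b hb
          refine ⟨toLeftMovesAdd (Sum.inr i), ?_⟩
          rw [PGame.add_moveLeft_inr]
          exact hIH _ _ _ _ (hsz' b (Or.inl hb)) hax' hbi
      · intro k
        induction k using PGame.leftMoves_add_cases with
        | hl i =>
          obtain ⟨k, hai⟩ := hx2 i
          have ha : xl[k.val] ∈ xl := xl.getElem_mem k.isLt
          refine toIdx (P := fun f => Agrees f _) (List.mem_append_left _ (List.mem_map_of_mem ha)) ?_
          rw [PGame.add_moveLeft_inl]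
          exact hIH _ _ _ _ (hsz _ (Or.inl ha)) hai hay'
        | hr i =>
          obtain ⟨k, hbi⟩ := hy2 i
          have hb : yl[k.val] ∈ yl := yl.getElem_mem k.isLt
          refine toIdx (P := fun f => Agrees f _) (List.mem_append_right _ (List.mem_map_of_mem hb)) ?_
          rw [PGame.add_moveLeft_inr]
          exact hIH _ _ _ _ (hsz' _ (Or.inl hb)) hax' hbi
      · intro f hf
        rcases List.mem_append.mp hf with hf | hf
        · obtain ⟨a, ha, rfl⟩ := List.mem_map.mp hf
          obtain ⟨j, haj⟩ := hx3 a ha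
          refine ⟨toRightMovesAdd (Sum.inl j), ?_⟩
          rw [PGame.add_moveRight_inl]
          exact hIH _ _ _ _ (hsz a (Or.inr ha)) haj hay'
        · obtain ⟨b, hb, rfl⟩ := List.mem_map.mp hf
          obtain ⟨j, hbj⟩ := hy3 b hb
          refine ⟨toRightMovesAdd (Sum.inr j), ?_⟩
          rw [PGame.add_moveRight_inr]
          exact hIH _ _ _ _ (hsz' b (Or.inr hb)) hax' hbj
      · intro k
        induction k using PGame.rightMoves_add_cases with
        | hl j =>
          obtain ⟨k, haj⟩ := hx4 j
          have ha : xr[k.val] ∈ xr := xr.getElem_mem k.isLt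
          refine toIdx (P := fun f => Agrees f _) (List.mem_append_left _ (List.mem_map_of_mem ha)) ?_
          rw [PGame.add_moveRight_inl]
          exact hIH _ _ _ _ (hsz _ (Or.inr ha)) haj hay'
        | hr j =>
          obtain ⟨k, hbj⟩ := hy4 j
          have hb : yr[k.val] ∈ yr := yr.getElem_mem k.isLt
          refine toIdx (P := fun f => Agrees f _) (List.mem_append_right _ (List.mem_map_of_mem hb)) ?_
          rw [PGame.add_moveRight_inr]
          exact hIH _ _ _ _ (hsz' _ (Or.inr hb)) hax' hbj

theorem agrees_value (p : Pos) : Agrees (fgValueFuel (stones p) p) (value p) :=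
  agrees_valueFuel _ _

/-- The clobber position `ooxoxx` is equivalent to the sum `oxox + ox`. -/
theorem ooxoxx_equiv :
    value [Cell.o, Cell.o, Cell.x, Cell.o, Cell.x, Cell.x] ≈
      value [Cell.o, Cell.x, Cell.o, Cell.x] + value [Cell.o, Cell.x] := by
  have ha := agrees_value [Cell.o, Cell.o, Cell.x, Cell.o, Cell.x, Cell.x]
  have hb := agrees_value [Cell.o, Cell.x, Cell.o, Cell.x]
  have hc := agrees_value [Cell.o, Cell.x]
  have hbc := agrees_addF 1000
    (fgValueFuel (stones [Cell.o, Cell.x, Cell.o, Cell.x]) [Cell.o, Cell.x, Cell.o, Cell.x])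
    (fgValueFuel (stones [Cell.o, Cell.x]) [Cell.o, Cell.x]) _ _ (by decide) hb hc
  constructor
  · exact (leB_correct 100000 _ _ _ _ (by decide) ha hbc).mp (by decide)
  · exact (leB_correct 100000 _ _ _ _ (by decide) hbc ha).mp (by decide)
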